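/- arXiv:1201.5322 — 2 statements merged into one kernel-verified Lean document; each statement's English description precedes it below -/
import Mathlib

section
/- In the unrestricted wreath product G Wr ℤ, let π_g ∈ G^ℤ be defined by π_g(i) = g for i ≥ 0 and π_g(i) = 1 for i < 0, and let c denote the generator of the acting copy of ℤ. Then for every g ∈ G, the element δ_0(g) of the base group (the function equal to g at position 0 and 1 elsewhere) lies in the derived (commutator) subgroup of the subgroup D = ⟨{π_g : g ∈ G} ∪ {c}⟩. -/
/-- The action of `H` on the full direct product `H → G` by permuting coordinates. -/
def permAction (G H : Type*) [Group G] [Group H] : H →* MulAut (H → G) where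
  toFun h :=
    { toFun := fun f x => f (h⁻¹ * x)
      invFun := fun f x => f (h * x)
      left_inv := fun f => funext fun x => by simp
      right_inv := fun f => funext fun x => by simp
      map_mul' := fun f g => rfl }
  map_one' := by
    apply MulEquiv.ext
    intro f; funext x; simp
  map_mul' := fun h₁ h₂ => by
    apply MulEquiv.ext
    intro f; funext x
    simp [mul_assoc]

/-- The unrestricted wreath product `G Wr ℤ` (with `ℤ` written multiplicatively). -/
abbrev WreathZ (G : Type*) [Group G] :=
  (Multiplicative ℤ → G) ⋊[permAction G (Multiplicative ℤ)] Multiplicative ℤ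

/-- The "half-infinite constant" element `π_g` of the base group: `g` at all
coordinates `i ≥ 0` and `1` at coordinates `i < 0`. -/
def piElt {G : Type*} [Group G] (g : G) : Multiplicative ℤ → G :=
  fun x => if 0 ≤ x.toAdd then g else 1

/-- The element `δ₀ g` of the base group: `g` at coordinate `0` and `1` elsewhere. -/
def deltaElt {G : Type*} [Group G] (g : G) : Multiplicative ℤ → G :=
  fun x => if x.toAdd = 0 then g else 1

/-- For every `g`, the element `δ₀ g` of the base group lies in the derived
(commutator) subgroup of `D = ⟨{π_g : g ∈ G} ∪ {c}⟩`, where `c` is the shift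
generator of the acting copy of `ℤ`. -/
theorem delta_mem_commutator_of_D (G : Type*) [Group G] (g : G) :
    SemidirectProduct.inl (deltaElt g) ∈
      ⁅(Subgroup.closure ((Set.range fun g : G => (SemidirectProduct.inl (piElt g) : WreathZ G))
          ∪ {SemidirectProduct.inr (Multiplicative.ofAdd (1 : ℤ))})),
        (Subgroup.closure ((Set.range fun g : G => (SemidirectProduct.inl (piElt g) : WreathZ G))
          ∪ {SemidirectProduct.inr (Multiplicative.ofAdd (1 : ℤ))}))⁆ := by
  open scoped commutatorElement in
  have key : (SemidirectProduct.inl (deltaElt g) : WreathZ G) =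
      ⁅(SemidirectProduct.inl (piElt g) : WreathZ G),
       SemidirectProduct.inr (Multiplicative.ofAdd (1 : ℤ))⁆ := by
    rw [commutatorElement_def]
    ext x
    · simp only [SemidirectProduct.mul_left, SemidirectProduct.left_inl,
        SemidirectProduct.left_inr, SemidirectProduct.inv_left, SemidirectProduct.mul_right,
        SemidirectProduct.right_inr, SemidirectProduct.right_inl, SemidirectProduct.inv_right,
        map_one, inv_one, one_mul, mul_one, MulAut.one_apply]
      simp only [deltaElt, piElt, permAction, MonoidHom.coe_mk, OneHom.coe_mk,
        MulEquiv.coe_mk, Equiv.coe_fn_mk, Pi.mul_apply, Pi.one_apply, Pi.inv_apply,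
        map_inv, map_one, one_mul, mul_one, inv_inv]
      have h1 : ((Multiplicative.ofAdd (1:ℤ))⁻¹ * x).toAdd = x.toAdd - 1 := by
        simp [sub_eq_neg_add]
      rw [h1]
      rcases lt_trichotomy x.toAdd 0 with h | h | h
      · rw [if_neg (by omega), if_neg (by omega), if_neg (by omega)]
        simp
      · rw [if_pos h, if_pos (by omega), if_neg (by omega)]
        simp
      · rw [if_neg (by omega), if_pos (by omega), if_pos (by omega)]
        simp
    · simp only [SemidirectProduct.mul_right, SemidirectProduct.right_inl,
        SemidirectProduct.right_inr, SemidirectProduct.inv_right]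
      group
  rw [key]
  apply Subgroup.commutator_mem_commutator
  · exact Subgroup.subset_closure (Or.inl ⟨g, rfl⟩)
  · exact Subgroup.subset_closure (Or.inr rfl)
end

section
/- Every countable group embeds into a group generated by two elements. -/
open SemidirectProduct Multiplicative

universe u

namespace TwoGenAux

variable (K : Type u) [Group K]

/-- The shift action of `ℤ` on `ℤ → K`. -/
def shift : Multiplicative ℤ →* MulAut (ℤ → K) where
  toFun s :=
    { toFun := fun f n => f (n - s.toAdd)
      invFun := fun f n => f (n + s.toAdd)
      left_inv := fun f => by funext n; simp
      right_inv := fun f => by funext n; simp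
      map_mul' := fun f g => rfl }
  map_one' := by ext f n; simp
  map_mul' := fun s t => by ext f n; simp [sub_sub]

@[simp] lemma shift_apply (s : Multiplicative ℤ) (f : ℤ → K) (n : ℤ) :
    shift K s f n = f (n - s.toAdd) := rfl

/-- The (unrestricted) wreath product `K Wr ℤ`. -/
abbrev W := (ℤ → K) ⋊[shift K] Multiplicative ℤ

/-- The shift generator. -/
def T : W K := inr (ofAdd 1)

variable {K}

/-- auxiliary function used to write an element of `K` as a commutator. -/
def β (g : K) : ℤ → K := fun n => if 0 ≤ n then g⁻¹ else 1

/-- The base element `B g` with `[T, B g] = δ₀ g`. -/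
def Bg (g : K) : W K := inl (β g)

lemma step1 (g : K) :
    T K * Bg g * (T K)⁻¹ * (Bg g)⁻¹ = inl (Pi.mulSingle (0 : ℤ) g) := by
  have h1 : T K * Bg g * (T K)⁻¹ = inl (shift K (ofAdd 1) (β g)) := by
    rw [T, Bg, ← map_inv inr (ofAdd (1:ℤ))]
    exact (inl_aut _ _).symm
  rw [h1, Bg, ← map_inv, ← map_mul]
  congr 1
  funext n
  rcases lt_trichotomy n 0 with h | h | h
  · have hne : n ≠ 0 := h.ne
    simp only [Pi.mul_apply, Pi.inv_apply, shift_apply, toAdd_ofAdd, β]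
    rw [if_neg (by omega), if_neg (by omega), Pi.mulSingle_eq_of_ne hne]
    simp
  · subst h
    simp only [Pi.mul_apply, Pi.inv_apply, shift_apply, toAdd_ofAdd, β]
    rw [if_neg (by omega), if_pos le_rfl, Pi.mulSingle_eq_same]
    simp
  · have hne : n ≠ 0 := h.ne'
    simp only [Pi.mul_apply, Pi.inv_apply, shift_apply, toAdd_ofAdd, β]
    rw [if_pos (by omega), if_pos (by omega), Pi.mulSingle_eq_of_ne hne]
    simp

lemma two_pow_int_inj {a b : ℕ} (h : (2:ℤ)^a = 2^b) : a = b := by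
  have h' : ((2^a : ℕ) : ℤ) = ((2^b : ℕ) : ℤ) := by push_cast; exact h
  exact Nat.pow_right_injective le_rfl (Nat.cast_injective h')

lemma pow_arith {a b k : ℕ} (h : (2:ℤ)^b - 2^a = 2^(k+1) - 1) :
    a = 0 ∧ b = k + 1 := by
  have h2 : (1:ℤ) < 2 := one_lt_two
  have hbpos : (0:ℤ) < 2^(k+1) - 1 := by
    have : (2:ℤ)^1 ≤ 2^(k+1) := pow_le_pow_right₀ (by norm_num) (by omega)
    simp at this; linarith
  have hab : a < b := by
    by_contra hab
    push_neg at hab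
    have : (2:ℤ)^b ≤ 2^a := pow_le_pow_right₀ (by norm_num) hab
    linarith
  have ha : a = 0 := by
    by_contra ha
    have h2a : (2:ℤ) ∣ 2^a := dvd_pow_self 2 ha
    have h2b : (2:ℤ) ∣ 2^b := dvd_pow_self 2 (by omega)
    have h2k : (2:ℤ) ∣ 2^(k+1) := dvd_pow_self 2 (by omega)
    have hd : (2:ℤ) ∣ (2^(k+1) - (2^b - 2^a)) := dvd_sub h2k (dvd_sub h2b h2a)
    have heq : (2:ℤ)^(k+1) - ((2:ℤ)^b - 2^a) = 1 := by rw [h]; ring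
    rw [heq] at hd
    norm_num at hd
  refine ⟨ha, ?_⟩
  subst ha
  have : (2:ℤ)^b = 2^(k+1) := by simp only [pow_zero] at h; linarith
  exact two_pow_int_inj this

variable (e : ℕ → K)

/-- `x 0 = T`, `x (k+1) = Bg (e k)`. -/
def x : ℕ → W K := fun k => Nat.rec (T K) (fun k _ => Bg (e k)) k

@[simp] lemma x_zero : x e 0 = T K := rfl
@[simp] lemma x_succ (k : ℕ) : x e (k+1) = Bg (e k) := rfl

open Classical in
/-- The Hall element: `F (2^k) = x k`, trivial elsewhere. -/
noncomputable def F : ℤ → W K := fun n =>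
  if h : ∃ j : ℕ, n = (2:ℤ)^j then x e h.choose else 1

lemma F_pow (k : ℕ) : F e ((2:ℤ)^k) = x e k := by
  rw [F]
  have h : ∃ j : ℕ, (2:ℤ)^k = (2:ℤ)^j := ⟨k, rfl⟩
  rw [dif_pos h]
  congr 1
  exact (two_pow_int_inj h.choose_spec).symm

lemma F_not {n : ℤ} (h : ¬ ∃ j : ℕ, n = (2:ℤ)^j) : F e n = 1 := by
  rw [F, dif_neg h]

/-- The element `A = inl F` of `W (W K)`. -/
noncomputable def A : W (W K) := inl (F e)

/-- The key commutator computation in the base of `W (W K)`. -/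
lemma step2 (k : ℕ) :
    shift (W K) (ofAdd ((2:ℤ)^(k+1) - 1)) (F e) * F e *
      (shift (W K) (ofAdd ((2:ℤ)^(k+1) - 1)) (F e))⁻¹ * (F e)⁻¹
      = Pi.mulSingle ((2:ℤ)^(k+1)) (inl (Pi.mulSingle (0:ℤ) (e k)) : W K) := by
  funext n
  simp only [Pi.mul_apply, Pi.inv_apply, shift_apply, toAdd_ofAdd]
  by_cases hn : n = (2:ℤ)^(k+1)
  · subst hn
    have h1 : (2:ℤ)^(k+1) - ((2:ℤ)^(k+1) - 1) = (2:ℤ)^0 := by norm_num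
    rw [h1, F_pow e 0, F_pow e (k+1), x_zero, x_succ, Pi.mulSingle_eq_same]
    exact step1 (e k)
  · rw [Pi.mulSingle_eq_of_ne hn]
    by_cases hb : ∃ j : ℕ, n = (2:ℤ)^j
    · by_cases ha : ∃ j : ℕ, n - ((2:ℤ)^(k+1) - 1) = (2:ℤ)^j
      · exfalso
        obtain ⟨b, hb⟩ := hb
        obtain ⟨a, ha⟩ := ha
        have : (2:ℤ)^b - 2^a = 2^(k+1) - 1 := by rw [← hb, ← ha]; ring
        obtain ⟨_, hbk⟩ := pow_arith this
        exact hn (by rw [hb, hbk])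
      · rw [F_not e ha]
        simp
    · rw [F_not e hb]
      simp

lemma conj0 {L : Type u} [Group L] (p : ℤ) (z : L) :
    (inr (ofAdd p) : W L)⁻¹ * inl (Pi.mulSingle p z) * inr (ofAdd p)
      = inl (Pi.mulSingle (0:ℤ) z) := by
  rw [← map_inv inr (ofAdd p), ← inl_aut_inv]
  congr 1
  funext n
  show Pi.mulSingle (M := fun _ : ℤ => L) p z (n + p) = Pi.mulSingle (M := fun _ : ℤ => L) 0 z n
  by_cases hn : n = 0
  · subst hn
    rw [zero_add, Pi.mulSingle_eq_same, Pi.mulSingle_eq_same]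
  · rw [Pi.mulSingle_eq_of_ne hn, Pi.mulSingle_eq_of_ne (by omega)]

lemma inr_ofAdd_eq_zpow (s : ℤ) : (inr (ofAdd s) : W K) = T K ^ s := by
  have h : ofAdd s = ofAdd (1:ℤ) ^ s := by rw [← ofAdd_zsmul]; norm_num
  rw [h, map_zpow]
  rfl

lemma mem_closure (k : ℕ) :
    (inl (Pi.mulSingle (0:ℤ) (inl (Pi.mulSingle (0:ℤ) (e k)) : W K)) : W (W K))
      ∈ Subgroup.closure {A e, T (W K)} := by
  set C := Subgroup.closure {A e, T (W K)} with hC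
  have hA : A e ∈ C := Subgroup.subset_closure (by simp)
  have hT : T (W K) ∈ C := Subgroup.subset_closure (by simp)
  have hTz : ∀ s : ℤ, (inr (ofAdd s) : W (W K)) ∈ C := fun s => by
    rw [inr_ofAdd_eq_zpow]; exact zpow_mem hT s
  have key : (inr (ofAdd ((2:ℤ)^(k+1))) : W (W K))⁻¹ *
      (inr (ofAdd ((2:ℤ)^(k+1) - 1)) * A e * (inr (ofAdd ((2:ℤ)^(k+1) - 1)))⁻¹ * A e *
        (inr (ofAdd ((2:ℤ)^(k+1) - 1)) * A e * (inr (ofAdd ((2:ℤ)^(k+1) - 1)))⁻¹)⁻¹ * (A e)⁻¹) *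
        inr (ofAdd ((2:ℤ)^(k+1)))
      = inl (Pi.mulSingle (0:ℤ) (inl (Pi.mulSingle (0:ℤ) (e k)) : W K)) := by
    have h1 : inr (ofAdd ((2:ℤ)^(k+1) - 1)) * A e * (inr (ofAdd ((2:ℤ)^(k+1) - 1)) : W (W K))⁻¹
        = inl (shift (W K) (ofAdd ((2:ℤ)^(k+1) - 1)) (F e)) := by
      rw [A, ← map_inv inr (ofAdd ((2:ℤ)^(k+1) - 1))]
      exact (inl_aut _ _).symm
    rw [h1, A, ← map_inv inl (shift (W K) (ofAdd ((2:ℤ)^(k+1) - 1)) (F e)),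
      ← map_inv inl (F e), ← map_mul, ← map_mul, ← map_mul, step2 e k, conj0]
  rw [← key]
  exact mul_mem (mul_mem (inv_mem (hTz _))
    (mul_mem (mul_mem (mul_mem (mul_mem (mul_mem (hTz _) hA) (inv_mem (hTz _))) hA)
      (inv_mem (mul_mem (mul_mem (hTz _) hA) (inv_mem (hTz _))))) (inv_mem hA))) (hTz _)

/-- The embedding `G →* W (W G)`, `g ↦ δ₀ (δ₀ g)`. -/
def Φ (K : Type u) [Group K] : K →* W (W K) :=
  SemidirectProduct.inl.comp ((MonoidHom.mulSingle (fun _ : ℤ => W K) 0).comp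
    (SemidirectProduct.inl.comp (MonoidHom.mulSingle (fun _ : ℤ => K) 0)))

lemma Φ_apply (g : K) :
    Φ K g = inl (Pi.mulSingle (0:ℤ) (inl (Pi.mulSingle (0:ℤ) g) : W K)) := rfl

lemma Φ_injective : Function.Injective (Φ K) := by
  intro g h hgh
  rw [Φ_apply, Φ_apply] at hgh
  have h1 := inl_injective hgh
  have h2 := congrFun h1 0
  rw [Pi.mulSingle_eq_same, Pi.mulSingle_eq_same] at h2
  have h3 := inl_injective h2
  have h4 := congrFun h3 0
  rwa [Pi.mulSingle_eq_same, Pi.mulSingle_eq_same] at h4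

end TwoGenAux

open TwoGenAux in
/-- Every countable group embeds into a group generated by two elements. -/
theorem countable_group_embeds_two_generator (G : Type u) [Group G] [Countable G] :
    ∃ (H : GrpCat.{u}) (a b : H) (φ : G →* H),
      Subgroup.closure {a, b} = ⊤ ∧ Function.Injective φ := by
  obtain ⟨e, he⟩ := exists_surjective_nat G
  set C : Subgroup (W (W G)) := Subgroup.closure {A e, T (W G)} with hC
  have hmem : ∀ g : G, Φ G g ∈ C := by
    intro g
    obtain ⟨k, rfl⟩ := he g
    rw [Φ_apply]
    exact mem_closure e k
  refine ⟨GrpCat.of C, ⟨A e, Subgroup.subset_closure (by simp)⟩,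
    ⟨T (W G), Subgroup.subset_closure (by simp)⟩, (Φ G).codRestrict C hmem, ?_, ?_⟩
  · have h := Subgroup.closure_closure_coe_preimage (k := {A e, T (W G)})
    convert h using 2
    ext x
    simp [Set.mem_preimage, Subtype.ext_iff]
  · intro g h hgh
    apply Φ_injective
    exact congrArg Subtype.val hgh
end
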